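/- Let d ≥ 2, λ ∈ [0,1], let Φ = |φ⟩⟨φ| with |φ⟩ = (1/√d) Σ_i e_i ⊗ e_i the maximally entangled state on ℂ^d ⊗ ℂ^d, and let ρ = λΦ + (1−λ)/(d²−1) (I − Φ) be the corresponding isotropic state. Then both the one-sided and the two-sided negativity of quantumness of ρ equal Q_N^A(ρ) = Q_N^{AB}(ρ) = |λd² − 1|/(2(d+1)). -/

import Mathlib

open scoped Kronecker ComplexOrder
open Matrix

noncomputable def traceNorm {ι : Type*} [Fintype ι] [DecidableEq ι] (A : Matrix ι ι ℂ) : ℝ :=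
  (((Matrix.isHermitian_conjTranspose_mul_self A).eigenvectorUnitary : Matrix ι ι ℂ) *
    Matrix.diagonal (fun i => ((Real.sqrt ((Matrix.isHermitian_conjTranspose_mul_self A).eigenvalues i) : ℝ) : ℂ)) *
    (star ((Matrix.isHermitian_conjTranspose_mul_self A).eigenvectorUnitary : Matrix ι ι ℂ))).trace.re

noncomputable def l1Norm {ι κ : Type*} [Fintype ι] [Fintype κ] (A : Matrix ι κ ℂ) : ℝ :=
  ∑ i, ∑ j, ‖A i j‖

def ptranspose {α β : Type*} (ρ : Matrix (α × β) (α × β) ℂ) : Matrix (α × β) (α × β) ℂ :=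
  Matrix.of fun p q => ρ (p.1, q.2) (q.1, p.2)

noncomputable def negativity {α β : Type*} [Fintype α] [Fintype β] [DecidableEq α] [DecidableEq β]
    (ρ : Matrix (α × β) (α × β) ℂ) : ℝ :=
  (traceNorm (ptranspose ρ) - 1) / 2

def matUnit {ι : Type*} [DecidableEq ι] (i j : ι) : Matrix ι ι ℂ :=
  Matrix.single i j 1

noncomputable def mcs {n : ℕ} (t : Fin n → Fin n → ℂ) :
    Matrix (Fin n × Fin n) (Fin n × Fin n) ℂ :=
  ∑ i, ∑ j, t i j • (matUnit i j ⊗ₖ matUnit i j)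

def blockOf {m n : ℕ} (ρ : Matrix (Fin m × Fin n) (Fin m × Fin n) ℂ) (i j : Fin m) :
    Matrix (Fin n) (Fin n) ℂ :=
  Matrix.of fun k l => ρ (i, k) (j, l)

noncomputable def conjU {m n : ℕ} (U : Matrix.unitaryGroup (Fin m) ℂ)
    (ρ : Matrix (Fin m × Fin n) (Fin m × Fin n) ℂ) : Matrix (Fin m × Fin n) (Fin m × Fin n) ℂ :=
  ((U : Matrix (Fin m) (Fin m) ℂ) ⊗ₖ (1 : Matrix (Fin n) (Fin n) ℂ))ᴴ * ρ *
    ((U : Matrix (Fin m) (Fin m) ℂ) ⊗ₖ (1 : Matrix (Fin n) (Fin n) ℂ))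

noncomputable def conjUV {m n : ℕ} (U : Matrix.unitaryGroup (Fin m) ℂ)
    (V : Matrix.unitaryGroup (Fin n) ℂ)
    (ρ : Matrix (Fin m × Fin n) (Fin m × Fin n) ℂ) : Matrix (Fin m × Fin n) (Fin m × Fin n) ℂ :=
  ((U : Matrix (Fin m) (Fin m) ℂ) ⊗ₖ (V : Matrix (Fin n) (Fin n) ℂ))ᴴ * ρ *
    ((U : Matrix (Fin m) (Fin m) ℂ) ⊗ₖ (V : Matrix (Fin n) (Fin n) ℂ))

noncomputable def QNA {m n : ℕ} (ρ : Matrix (Fin m × Fin n) (Fin m × Fin n) ℂ) : ℝ :=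
  ⨅ U : Matrix.unitaryGroup (Fin m) ℂ,
    ((∑ i, ∑ j, traceNorm (blockOf (conjU U ρ) i j)) - 1) / 2

noncomputable def QNAB {m n : ℕ} (ρ : Matrix (Fin m × Fin n) (Fin m × Fin n) ℂ) : ℝ :=
  ⨅ U : Matrix.unitaryGroup (Fin m) ℂ, ⨅ V : Matrix.unitaryGroup (Fin n) ℂ,
    (l1Norm (conjUV U V ρ) - 1) / 2

/-- The maximally entangled unit vector `|φ⟩ = (1/√d) Σ_i e_i ⊗ e_i` on `ℂ^d ⊗ ℂ^d`. -/
noncomputable def meVec (d : ℕ) : (Fin d × Fin d) → ℂ :=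
  fun p => if p.1 = p.2 then ((1 / Real.sqrt d : ℝ) : ℂ) else 0

/-- The projector `Φ = |φ⟩⟨φ|` onto the maximally entangled state. -/
noncomputable def mePhi (d : ℕ) : Matrix (Fin d × Fin d) (Fin d × Fin d) ℂ :=
  Matrix.vecMulVec (meVec d) (star (meVec d))

/-- The isotropic state `ρ = λΦ + (1−λ)/(d²−1) (I − Φ)`. -/
noncomputable def isotropic (d : ℕ) (lam : ℝ) : Matrix (Fin d × Fin d) (Fin d × Fin d) ℂ :=
  (lam : ℂ) • mePhi d +
    (((1 - lam) / (d ^ 2 - 1) : ℝ) : ℂ) •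
      ((1 : Matrix (Fin d × Fin d) (Fin d × Fin d) ℂ) - mePhi d)

set_option linter.unusedSectionVars false

variable {ι : Type*} [Fintype ι] [DecidableEq ι]

lemma vecMulVec_conjT (a b : ι → ℂ) : (vecMulVec a (star b))ᴴ = vecMulVec b (star a) := by
  ext p q; simp [conjTranspose_apply, vecMulVec_apply, mul_comm]

lemma vecMulVec_mul' (a b x y : ι → ℂ) :
    vecMulVec a b * vecMulVec x y = (b ⬝ᵥ x) • vecMulVec a y := by
  ext p q
  simp only [Matrix.mul_apply, vecMulVec_apply, Matrix.smul_apply, smul_eq_mul, dotProduct,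
    Finset.sum_mul]
  exact Finset.sum_congr rfl fun s _ => by ring

lemma trace_vecMulVec' (a b : ι → ℂ) : (vecMulVec a b).trace = a ⬝ᵥ b := by
  simp [Matrix.trace, Matrix.diag, vecMulVec_apply, dotProduct]

lemma posSemidef_outer (w : ι → ℂ) : PosSemidef (vecMulVec w (star w)) := by
  refine PosSemidef.of_dotProduct_mulVec_nonneg ?_ ?_
  · exact vecMulVec_conjT w w
  · intro x
    have h : star x ⬝ᵥ (vecMulVec w (star w) *ᵥ x) = star (star w ⬝ᵥ x) * (star w ⬝ᵥ x) := by
      simp only [dotProduct, mulVec, vecMulVec_apply, Pi.star_apply, star_sum, star_mul',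
        star_star, Finset.mul_sum, Finset.sum_mul]
      rw [Finset.sum_comm]
      exact Finset.sum_congr rfl fun p _ => Finset.sum_congr rfl fun q _ => by ring
    rw [h]
    exact star_mul_self_nonneg _

open scoped MatrixOrder in
lemma traceNorm_eq_sqrt (A : Matrix ι ι ℂ) : traceNorm A = (CFC.sqrt (Aᴴ * A)).trace.re := by
  have hA := Matrix.posSemidef_conjTranspose_mul_self A
  rw [CFC.sqrt_eq_cfc, cfc_nnreal_eq_real _ _ hA.nonneg,
    (isHermitian_conjTranspose_mul_self A).cfc_eq]
  unfold traceNorm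
  simp [IsHermitian.cfc, Function.comp_def]
  simp_rw [max_eq_left (hA.eigenvalues_nonneg _)]

open scoped MatrixOrder in
lemma traceNorm_psd {M : Matrix ι ι ℂ} (hM : M.PosSemidef) : traceNorm M = M.trace.re := by
  have h1 : M ^ 2 = Mᴴ * M := by rw [pow_two, hM.1.eq]
  have h2 : CFC.sqrt (Mᴴ * M) = M := CFC.sqrt_unique (by rw [← h1, pow_two]) hM.nonneg
  rw [traceNorm_eq_sqrt, h2]

open scoped MatrixOrder in
lemma traceNorm_outer (a b : ι → ℂ) (α β : ℝ) (hα : 0 ≤ α) (hβ : 0 < β)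
    (ha : star a ⬝ᵥ a = ((α ^ 2 : ℝ) : ℂ)) (hb : star b ⬝ᵥ b = ((β ^ 2 : ℝ) : ℂ)) :
    traceNorm (vecMulVec a (star b)) = α * β := by
  set A := vecMulVec a (star b) with hA
  set t : ℝ := α / β with htdef
  have ht : 0 ≤ t := div_nonneg hα hβ.le
  set S : Matrix ι ι ℂ := ((t : ℝ) : ℂ) • vecMulVec b (star b) with hSdef
  have hS_outer : S = vecMulVec ((Real.sqrt t : ℂ) • b) (star ((Real.sqrt t : ℂ) • b)) := by
    ext p q
    simp only [hSdef, Matrix.smul_apply, vecMulVec_apply, Pi.smul_apply, Pi.star_apply, smul_eq_mul,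
      star_mul', Complex.star_def, Complex.conj_ofReal]
    have h2 : ((t : ℝ) : ℂ) = (Real.sqrt t : ℂ) * (Real.sqrt t : ℂ) := by
      rw [← Complex.ofReal_mul, Real.mul_self_sqrt ht]
    rw [h2]
    ring
  have hS_psd : PosSemidef S := hS_outer ▸ posSemidef_outer _
  have hβ' : (β : ℂ) ≠ 0 := by exact_mod_cast hβ.ne'
  have hscal : ((t : ℝ) : ℂ) * ((t : ℝ) : ℂ) * ((β ^ 2 : ℝ) : ℂ) = ((α ^ 2 : ℝ) : ℂ) := by
    rw [htdef]
    push_cast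
    field_simp
  have hsq : S ^ 2 = Aᴴ * A := by
    rw [pow_two, hSdef, hA, vecMulVec_conjT, smul_mul_assoc, mul_smul_comm, smul_smul,
      vecMulVec_mul', vecMulVec_mul', ha, hb, smul_smul, hscal]
  have key : S = CFC.sqrt (Aᴴ * A) :=
    (CFC.sqrt_unique (by rw [← hsq, pow_two]) hS_psd.nonneg).symm
  rw [traceNorm_eq_sqrt, ← key, hSdef, Matrix.trace_smul, trace_vecMulVec']
  have hbb : b ⬝ᵥ star b = ((β ^ 2 : ℝ) : ℂ) := by
    rw [← hb]; simp [dotProduct, mul_comm]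
  rw [hbb, smul_eq_mul, ← Complex.ofReal_mul, Complex.ofReal_re, htdef]
  field_simp

section X
variable {ι : Type*} [Fintype ι] [DecidableEq ι]

lemma conj_outer (M : Matrix ι ι ℂ) (x : ι → ℂ) :
    Mᴴ * vecMulVec x (star x) * M = vecMulVec (Mᴴ *ᵥ x) (star (Mᴴ *ᵥ x)) := by
  ext p q
  simp only [Matrix.mul_apply, vecMulVec_apply, mulVec, dotProduct, conjTranspose_apply,
    Pi.star_apply, star_sum, star_mul', star_star, Finset.sum_mul, Finset.mul_sum]
  exact Finset.sum_congr rfl fun r _ => Finset.sum_congr rfl fun s _ => by ring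

lemma conj_iso (K : Matrix ι ι ℂ) (hK : Kᴴ * K = 1) (c μ : ℝ) (x : ι → ℂ) :
    Kᴴ * ((c : ℂ) • (1 : Matrix ι ι ℂ) + (μ : ℂ) • vecMulVec x (star x)) * K
      = (c : ℂ) • (1 : Matrix ι ι ℂ)
        + (μ : ℂ) • vecMulVec (Kᴴ *ᵥ x) (star (Kᴴ *ᵥ x)) := by
  rw [Matrix.mul_add, Matrix.add_mul]
  congr 1
  · rw [Matrix.mul_smul, Matrix.smul_mul, Matrix.mul_one, hK]
  · rw [Matrix.mul_smul, Matrix.smul_mul, conj_outer]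
end X

lemma kron_conjT {m n : ℕ} (A : Matrix (Fin m) (Fin m) ℂ) (B : Matrix (Fin n) (Fin n) ℂ) :
    (A ⊗ₖ B)ᴴ = Aᴴ ⊗ₖ Bᴴ := by
  ext p q
  simp [conjTranspose_apply]

lemma kron_unitary {m n : ℕ} (U : Matrix.unitaryGroup (Fin m) ℂ)
    (V : Matrix.unitaryGroup (Fin n) ℂ) :
    ((U : Matrix (Fin m) (Fin m) ℂ) ⊗ₖ (V : Matrix (Fin n) (Fin n) ℂ))ᴴ *
      ((U : Matrix (Fin m) (Fin m) ℂ) ⊗ₖ (V : Matrix (Fin n) (Fin n) ℂ)) = 1 := by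
  rw [kron_conjT, ← Matrix.mul_kronecker_mul, ← Matrix.star_eq_conjTranspose,
    ← Matrix.star_eq_conjTranspose, Matrix.UnitaryGroup.star_mul_self,
    Matrix.UnitaryGroup.star_mul_self, Matrix.one_kronecker_one]

lemma kron_unitary' {m n : ℕ} (U : Matrix.unitaryGroup (Fin m) ℂ)
    (V : Matrix.unitaryGroup (Fin n) ℂ) :
    ((U : Matrix (Fin m) (Fin m) ℂ) ⊗ₖ (V : Matrix (Fin n) (Fin n) ℂ)) *
      ((U : Matrix (Fin m) (Fin m) ℂ) ⊗ₖ (V : Matrix (Fin n) (Fin n) ℂ))ᴴ = 1 := by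
  rw [kron_conjT, ← Matrix.mul_kronecker_mul, ← Matrix.star_eq_conjTranspose,
    ← Matrix.star_eq_conjTranspose, (Matrix.mem_unitaryGroup_iff.mp U.2),
    (Matrix.mem_unitaryGroup_iff.mp V.2), Matrix.one_kronecker_one]

lemma unitary_col {m : ℕ} (U : Matrix.unitaryGroup (Fin m) ℂ) (i j : Fin m) :
    ∑ k, (starRingEnd ℂ) ((U : Matrix (Fin m) (Fin m) ℂ) k i) *
      (U : Matrix (Fin m) (Fin m) ℂ) k j = if i = j then 1 else 0 := by
  have h := Matrix.UnitaryGroup.star_mul_self U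
  have h2 := congrFun (congrFun (congrArg (fun M : Matrix (Fin m) (Fin m) ℂ => M) h) i) j
  simp only [Matrix.star_eq_conjTranspose] at h2
  have h3 : ((U : Matrix (Fin m) (Fin m) ℂ)ᴴ * (U : Matrix (Fin m) (Fin m) ℂ)) i j
      = (1 : Matrix (Fin m) (Fin m) ℂ) i j := by
    rw [show ((U : Matrix (Fin m) (Fin m) ℂ)ᴴ : Matrix (Fin m) (Fin m) ℂ)
        = star (U : Matrix (Fin m) (Fin m) ℂ) from rfl, h]
  rw [Matrix.mul_apply] at h3
  simpa [conjTranspose_apply, Matrix.one_apply] using h3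

lemma psiA_apply {d : ℕ} (U : Matrix.unitaryGroup (Fin d) ℂ) (k l : Fin d) :
    (((U : Matrix (Fin d) (Fin d) ℂ) ⊗ₖ (1 : Matrix (Fin d) (Fin d) ℂ))ᴴ *ᵥ meVec d) (k, l)
      = (starRingEnd ℂ) ((U : Matrix (Fin d) (Fin d) ℂ) l k) * ((1 / Real.sqrt d : ℝ) : ℂ) := by
  simp only [mulVec, dotProduct, Fintype.sum_prod_type, conjTranspose_apply,
    kroneckerMap_apply, meVec, Matrix.one_apply, star_mul', mul_ite, mul_zero, ite_mul, zero_mul,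
    star_one, star_zero, Finset.sum_ite_eq, Finset.sum_ite_eq', Finset.mem_univ,
    if_true]
  simp [apply_ite (star : ℂ → ℂ), Finset.sum_ite_eq', Complex.star_def]

lemma psiUV_apply {d : ℕ} (U V : Matrix.unitaryGroup (Fin d) ℂ) (k l : Fin d) :
    (((U : Matrix (Fin d) (Fin d) ℂ) ⊗ₖ (V : Matrix (Fin d) (Fin d) ℂ))ᴴ *ᵥ meVec d) (k, l)
      = ((1 / Real.sqrt d : ℝ) : ℂ) *
          ∑ i, (starRingEnd ℂ) ((U : Matrix (Fin d) (Fin d) ℂ) i k)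
            * (starRingEnd ℂ) ((V : Matrix (Fin d) (Fin d) ℂ) i l) := by
  simp only [mulVec, dotProduct, Fintype.sum_prod_type, conjTranspose_apply,
    kroneckerMap_apply, meVec, star_mul', mul_ite, mul_zero, Finset.sum_ite_eq,
    Finset.sum_ite_eq', Finset.mem_univ, if_true, Finset.mul_sum]
  simp only [Complex.star_def]
  exact Finset.sum_congr rfl fun i _ => by ring

lemma blockA {d : ℕ} (hd : 0 < d) (c μ : ℝ) (hc : 0 ≤ c) (hcm : 0 ≤ c + μ / d)
    (U : Matrix.unitaryGroup (Fin d) ℂ) (i j : Fin d) :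
    traceNorm (blockOf (conjU U ((c : ℂ) • (1 : Matrix (Fin d × Fin d) (Fin d × Fin d) ℂ)
        + (μ : ℂ) • mePhi d)) i j)
      = if i = j then c * d + μ / d else |μ| / d := by
  have hd0 : (0 : ℝ) < (d : ℝ) := by exact_mod_cast hd
  set s : ℝ := 1 / Real.sqrt d with hsdef
  have hsqd : (0 : ℝ) < Real.sqrt d := Real.sqrt_pos.mpr hd0
  have hs : 0 < s := by positivity
  have hss : s * s = 1 / d := by
    rw [hsdef, div_mul_div_comm, one_mul, Real.mul_self_sqrt hd0.le]
  set ψ : (Fin d × Fin d) → ℂ :=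
    ((U : Matrix (Fin d) (Fin d) ℂ) ⊗ₖ (1 : Matrix (Fin d) (Fin d) ℂ))ᴴ *ᵥ meVec d with hψdef
  have hK : ((U : Matrix (Fin d) (Fin d) ℂ) ⊗ₖ (1 : Matrix (Fin d) (Fin d) ℂ))ᴴ *
      ((U : Matrix (Fin d) (Fin d) ℂ) ⊗ₖ (1 : Matrix (Fin d) (Fin d) ℂ)) = 1 := by
    simpa using kron_unitary U (1 : Matrix.unitaryGroup (Fin d) ℂ)
  have hconj : conjU U ((c : ℂ) • (1 : Matrix (Fin d × Fin d) (Fin d × Fin d) ℂ)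
        + (μ : ℂ) • mePhi d)
      = (c : ℂ) • (1 : Matrix (Fin d × Fin d) (Fin d × Fin d) ℂ)
        + (μ : ℂ) • vecMulVec ψ (star ψ) := by
    unfold conjU mePhi
    exact conj_iso _ hK c μ (meVec d)
  set b : Fin d → Fin d → ℂ := fun i' k => (starRingEnd ℂ) ((U : Matrix (Fin d) (Fin d) ℂ) k i')
      * ((s : ℝ) : ℂ) with hbdef
  have hψb : ∀ i' k, ψ (i', k) = b i' k := fun i' k => psiA_apply U i' k
  have hblock : blockOf (conjU U ((c : ℂ) • (1 : Matrix (Fin d × Fin d) (Fin d × Fin d) ℂ)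
        + (μ : ℂ) • mePhi d)) i j
      = (if i = j then (c : ℂ) else 0) • (1 : Matrix (Fin d) (Fin d) ℂ)
        + (μ : ℂ) • vecMulVec (b i) (star (b j)) := by
    rw [hconj]
    ext k l
    simp only [blockOf, Matrix.of_apply, Matrix.add_apply, Matrix.smul_apply,
      Matrix.one_apply, vecMulVec_apply, Pi.star_apply, smul_eq_mul, hψb]
    by_cases h1 : i = j <;> by_cases h2 : k = l <;>
      simp [h1, h2, Prod.ext_iff]
  have hbb : ∀ i' j', star (b i') ⬝ᵥ b j' = if i' = j' then (((1 : ℝ) / d : ℝ) : ℂ) else 0 := by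
    intro i' j'
    have : star (b i') ⬝ᵥ b j'
        = ((s * s : ℝ) : ℂ) * ∑ k, (starRingEnd ℂ) ((U : Matrix (Fin d) (Fin d) ℂ) k j')
            * (U : Matrix (Fin d) (Fin d) ℂ) k i' := by
      simp only [dotProduct, Pi.star_apply, hbdef, star_mul', RCLike.star_def,
        RingHomCompTriple.comp_apply, Complex.conj_ofReal, starRingEnd_self_apply,
        Complex.ofReal_mul, Finset.mul_sum]
      exact Finset.sum_congr rfl fun k _ => by simp only [RingHom.id_apply]; ring
    rw [this, unitary_col U j' i', hss]
    by_cases h : i' = j' <;> simp [h, eq_comm]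
  rw [hblock]
  by_cases hij : i = j
  · subst hij
    simp only [eq_self_iff_true, if_true]
    set P : Matrix (Fin d) (Fin d) ℂ := vecMulVec (b i) (star (b i)) with hPdef
    have hPH : Pᴴ = P := vecMulVec_conjT _ _
    have hPP : P * P = (((1 : ℝ) / d : ℝ) : ℂ) • P := by
      rw [hPdef, vecMulVec_mul', hbb i i, if_pos rfl]
    set Q : Matrix (Fin d) (Fin d) ℂ := ((d : ℝ) : ℂ) • P with hQdef
    have hdC : ((d : ℝ) : ℂ) ≠ 0 := by exact_mod_cast hd0.ne'
    have hQQ : Q * Q = Q := by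
      rw [hQdef, smul_mul_assoc, mul_smul_comm, smul_smul, hPP, smul_smul]
      congr 1
      push_cast
      field_simp
    have hQH : Qᴴ = Q := by
      rw [hQdef, conjTranspose_smul, hPH]
      congr 1
      simp [Complex.star_def, Complex.conj_ofReal]
    set m : ℝ := c + μ / d with hmdef
    set α : ℝ := Real.sqrt c with hαdef
    set γ : ℝ := Real.sqrt m - Real.sqrt c with hγdef
    set N : Matrix (Fin d) (Fin d) ℂ := ((α : ℝ) : ℂ) • (1 : Matrix (Fin d) (Fin d) ℂ)
        + ((γ : ℝ) : ℂ) • Q with hNdef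
    have hNH : Nᴴ = N := by
      rw [hNdef, conjTranspose_add, conjTranspose_smul, conjTranspose_smul,
        conjTranspose_one, hQH]
      simp [Complex.star_def, Complex.conj_ofReal]
    have hscal2 : α * γ + (γ * α + γ * γ) = μ / d := by
      have h1 : (Real.sqrt c) ^ 2 = c := Real.sq_sqrt hc
      have h2 : (Real.sqrt m) ^ 2 = m := Real.sq_sqrt (by rw [hmdef]; exact hcm)
      rw [hαdef, hγdef]
      have hexp : Real.sqrt c * (Real.sqrt m - Real.sqrt c)
          + ((Real.sqrt m - Real.sqrt c) * Real.sqrt c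
            + (Real.sqrt m - Real.sqrt c) * (Real.sqrt m - Real.sqrt c))
          = Real.sqrt m ^ 2 - Real.sqrt c ^ 2 := by ring
      rw [hexp, h1, h2, hmdef]
      ring
    have hμP : (μ : ℂ) • P = ((μ / d : ℝ) : ℂ) • Q := by
      rw [hQdef, smul_smul]
      congr 1
      push_cast
      field_simp
    have hNN : Nᴴ * N = (c : ℂ) • (1 : Matrix (Fin d) (Fin d) ℂ) + (μ : ℂ) • P := by
      rw [hNH, hNdef, hμP]
      simp only [Matrix.add_mul, Matrix.mul_add, smul_mul_assoc, mul_smul_comm,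
        Matrix.one_mul, Matrix.mul_one, hQQ, smul_smul]
      have hαα : ((α : ℝ) : ℂ) * ((α : ℝ) : ℂ) = ((c : ℝ) : ℂ) := by
        rw [← Complex.ofReal_mul, hαdef, Real.mul_self_sqrt hc]
      have hre : α * (γ * (d : ℝ)) + γ * (α * (d : ℝ) + γ * (d : ℝ)) = μ := by
        have hd' : (d : ℝ) ≠ 0 := hd0.ne'
        field_simp at hscal2
        nlinarith [hscal2]
      match_scalars
      · simp only [mul_one]
        rw [← Complex.ofReal_mul, hαdef, Real.mul_self_sqrt hc]
      · simp only [mul_one]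
        rw [div_mul_cancel₀ _ (show ((d : ℕ) : ℂ) ≠ 0 by exact_mod_cast hd.ne')]
        exact_mod_cast hre
    have hMpsd : PosSemidef ((c : ℂ) • (1 : Matrix (Fin d) (Fin d) ℂ) + (μ : ℂ) • P) := by
      rw [← hNN]
      exact Matrix.posSemidef_conjTranspose_mul_self N
    rw [traceNorm_psd hMpsd]
    rw [Matrix.trace_add, Matrix.trace_smul, Matrix.trace_smul, Matrix.trace_one, hPdef,
      trace_vecMulVec']
    have hP_tr : b i ⬝ᵥ star (b i) = (((1 : ℝ) / d : ℝ) : ℂ) := by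
      rw [dotProduct_comm]
      simpa using hbb i i
    rw [hP_tr]
    simp only [smul_eq_mul, Finset.card_univ, Fintype.card_fin]
    push_cast
    simp [Complex.add_re, Complex.mul_re]
    ring
  · rw [if_neg hij, if_neg hij, zero_smul, zero_add]
    have hres : (μ : ℂ) • vecMulVec (b i) (star (b j))
        = vecMulVec ((μ : ℂ) • b i) (star (b j)) := by
      ext k l
      simp only [Matrix.smul_apply, vecMulVec_apply, Pi.smul_apply, smul_eq_mul]
      ring
    rw [hres]
    have ha : star ((μ : ℂ) • b i) ⬝ᵥ ((μ : ℂ) • b i) = (((|μ| * s) ^ 2 : ℝ) : ℂ) := by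
      rw [star_smul, smul_dotProduct, dotProduct_smul, hbb i i, if_pos rfl]
      have h1 : ((|μ| * s) ^ 2 : ℝ) = μ ^ 2 * (1 / (d : ℝ)) := by
        rw [mul_pow, sq_abs, show s ^ 2 = 1 / (d : ℝ) by rw [pow_two, hss]]
      rw [h1]
      simp only [smul_eq_mul, Complex.star_def, Complex.conj_ofReal]
      push_cast
      ring
    have hb2 : star (b j) ⬝ᵥ b j = ((s ^ 2 : ℝ) : ℂ) := by
      rw [hbb j j, if_pos rfl]
      congr 1
      rw [pow_two, hss]
    rw [traceNorm_outer (( μ : ℂ) • b i) (b j) (|μ| * s) s (by positivity) hs ha hb2]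
    rw [mul_assoc, hss]
    field_simp

lemma qna_sum {d : ℕ} (hd : 0 < d) (c μ : ℝ) (hc : 0 ≤ c) (hcm : 0 ≤ c + μ / d)
    (U : Matrix.unitaryGroup (Fin d) ℂ) :
    ∑ i, ∑ j, traceNorm (blockOf (conjU U ((c : ℂ) • (1 : Matrix (Fin d × Fin d) (Fin d × Fin d) ℂ)
        + (μ : ℂ) • mePhi d)) i j)
      = c * (d : ℝ) ^ 2 + μ + ((d : ℝ) - 1) * |μ| := by
  have hd0 : (0 : ℝ) < (d : ℝ) := by exact_mod_cast hd
  have hval : ∀ i j : Fin d, traceNorm (blockOf (conjU U ((c : ℂ) • 1 + (μ : ℂ) • mePhi d)) i j)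
      = if i = j then c * d + μ / d else |μ| / d := fun i j => blockA hd c μ hc hcm U i j
  simp_rw [hval]
  have hrow : ∀ i : Fin d, (∑ j, if i = j then c * (d:ℝ) + μ / d else |μ| / d)
      = (d : ℝ) * (|μ| / d) + (c * d + μ / d - |μ| / d) := by
    intro i
    have : ∀ j : Fin d, (if i = j then c * (d:ℝ) + μ / d else |μ| / d)
        = |μ| / d + (if i = j then c * d + μ / d - |μ| / d else 0) := by
      intro j; split_ifs <;> ring
    simp_rw [this, Finset.sum_add_distrib, Finset.sum_ite_eq, Finset.mem_univ, if_true,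
      Finset.sum_const, Finset.card_univ, Fintype.card_fin, nsmul_eq_mul]
  simp_rw [hrow, Finset.sum_const, Finset.card_univ, Fintype.card_fin, nsmul_eq_mul]
  field_simp
  ring

lemma l1_split {ι : Type*} [Fintype ι] [DecidableEq ι] (c μ : ℝ) (ψ : ι → ℂ) :
    l1Norm ((c : ℂ) • (1 : Matrix ι ι ℂ) + (μ : ℂ) • vecMulVec ψ (star ψ))
      = (∑ p, |c + μ * (‖ψ p‖) ^ 2|)
        + |μ| * ((∑ p, ‖ψ p‖) ^ 2 - ∑ p, (‖ψ p‖) ^ 2) := by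
  set r : ι → ℝ := fun p => ‖ψ p‖ with hrdef
  set S : ℝ := ∑ p, r p with hSdef
  have hdiag : ∀ p : ι, ‖((c : ℂ) • (1 : Matrix ι ι ℂ)
      + (μ : ℂ) • vecMulVec ψ (star ψ)) p p‖ = |c + μ * r p ^ 2| := by
    intro p
    have : ((c : ℂ) • (1 : Matrix ι ι ℂ) + (μ : ℂ) • vecMulVec ψ (star ψ)) p p
        = ((c + μ * r p ^ 2 : ℝ) : ℂ) := by
      simp only [Matrix.add_apply, Matrix.smul_apply, Matrix.one_apply_eq, vecMulVec_apply,
        Pi.star_apply, smul_eq_mul, mul_one]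
      rw [show ψ p * star (ψ p) = ((‖ψ p‖ ^ 2 : ℝ) : ℂ) by
        rw [← Complex.normSq_eq_norm_sq, ← Complex.mul_conj]; rfl]
      push_cast
      rfl
    rw [this, Complex.norm_real, Real.norm_eq_abs]
  have hoff : ∀ p q : ι, p ≠ q → ‖((c : ℂ) • (1 : Matrix ι ι ℂ)
      + (μ : ℂ) • vecMulVec ψ (star ψ)) p q‖ = |μ| * (r p * r q) := by
    intro p q hpq
    have : ((c : ℂ) • (1 : Matrix ι ι ℂ) + (μ : ℂ) • vecMulVec ψ (star ψ)) p q
        = (μ : ℂ) * (ψ p * (starRingEnd ℂ) (ψ q)) := by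
      simp [Matrix.one_apply_ne hpq, vecMulVec_apply]
    rw [this]
    simp only [norm_mul, Complex.norm_conj, Complex.norm_real, Real.norm_eq_abs, hrdef]
    try ring
  unfold l1Norm
  have hsum : ∀ p : ι, (∑ q, ‖((c : ℂ) • (1 : Matrix ι ι ℂ)
      + (μ : ℂ) • vecMulVec ψ (star ψ)) p q‖)
      = |c + μ * r p ^ 2| + |μ| * (r p * (S - r p)) := by
    intro p
    rw [← Finset.add_sum_erase _ _ (Finset.mem_univ p), hdiag p]
    congr 1
    have : ∀ q ∈ Finset.univ.erase p, ‖((c : ℂ) • (1 : Matrix ι ι ℂ)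
        + (μ : ℂ) • vecMulVec ψ (star ψ)) p q‖ = |μ| * r p * r q := by
      intro q hq
      rw [hoff p q (Finset.ne_of_mem_erase hq).symm]
      ring
    rw [Finset.sum_congr rfl this]
    rw [← Finset.mul_sum, Finset.sum_erase_eq_sub (Finset.mem_univ p), ← hSdef]
    ring
  rw [Finset.sum_congr rfl (fun p _ => hsum p), Finset.sum_add_distrib]
  congr 1
  rw [← Finset.mul_sum]
  congr 1
  rw [Finset.sum_congr rfl (fun p _ => by ring : ∀ p ∈ Finset.univ,
    r p * (S - r p) = S * r p - r p ^ 2), Finset.sum_sub_distrib, ← Finset.mul_sum, ← hSdef]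
  ring

lemma col_norm {d : ℕ} (U : Matrix.unitaryGroup (Fin d) ℂ) (k : Fin d) :
    ∑ i, (‖(U : Matrix (Fin d) (Fin d) ℂ) i k‖) ^ 2 = 1 := by
  have h := unitary_col U k k
  rw [if_pos rfl] at h
  have h2 : ∀ i : Fin d, (starRingEnd ℂ) ((U : Matrix (Fin d) (Fin d) ℂ) i k)
      * (U : Matrix (Fin d) (Fin d) ℂ) i k
      = ((‖(U : Matrix (Fin d) (Fin d) ℂ) i k‖ ^ 2 : ℝ) : ℂ) := by
    intro i
    rw [mul_comm, Complex.mul_conj, Complex.normSq_eq_norm_sq]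
  rw [Finset.sum_congr rfl (fun i _ => h2 i), ← Complex.ofReal_sum] at h
  exact_mod_cast h

lemma sum_prod_ite {d : ℕ} (x y : ℝ) :
    ∑ p : Fin d × Fin d, (if p.1 = p.2 then x else y)
      = (d : ℝ) * x + ((d : ℝ) ^ 2 - d) * y := by
  rw [Fintype.sum_prod_type]
  have hrow : ∀ a : Fin d, (∑ b : Fin d, if a = b then x else y)
      = (d : ℝ) * y + (x - y) := by
    intro a
    have : ∀ b : Fin d, (if a = b then x else y) = y + (if a = b then x - y else 0) := by
      intro b; split_ifs <;> ring
    simp_rw [this, Finset.sum_add_distrib, Finset.sum_ite_eq, Finset.mem_univ, if_true,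
      Finset.sum_const, Finset.card_univ, Fintype.card_fin, nsmul_eq_mul]
  simp_rw [hrow, Finset.sum_const, Finset.card_univ, Fintype.card_fin, nsmul_eq_mul]
  ring

lemma psi_norm {d : ℕ} (K : Matrix (Fin d × Fin d) (Fin d × Fin d) ℂ)
    (hK : K * Kᴴ = 1) (hd : 0 < d) :
    ∑ p, (‖(Kᴴ *ᵥ meVec d) p‖) ^ 2 = 1 := by
  have hd0 : (0 : ℝ) < (d : ℝ) := by exact_mod_cast hd
  have h1 : star (Kᴴ *ᵥ meVec d) ⬝ᵥ (Kᴴ *ᵥ meVec d) = star (meVec d) ⬝ᵥ meVec d := by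
    rw [star_mulVec, conjTranspose_conjTranspose, dotProduct_mulVec, vecMul_vecMul, hK,
      vecMul_one]
  have h2 : star (meVec d) ⬝ᵥ meVec d = 1 := by
    have hterm : ∀ p : Fin d × Fin d, star (meVec d p) * meVec d p
        = (((if p.1 = p.2 then (1 / (d : ℝ)) else 0) : ℝ) : ℂ) := by
      intro p
      by_cases h : p.1 = p.2
      · simp only [meVec, h, if_true, Complex.star_def, Complex.conj_ofReal]
        rw [← Complex.ofReal_mul, div_mul_div_comm, one_mul, Real.mul_self_sqrt hd0.le]
      · simp [meVec, h]
    simp only [dotProduct, Pi.star_apply]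
    rw [Finset.sum_congr rfl fun p _ => hterm p, ← Complex.ofReal_sum, sum_prod_ite]
    have hval : (d : ℝ) * (1 / d) + ((d : ℝ) ^ 2 - d) * 0 = 1 := by field_simp; ring
    rw [hval]
    norm_num
  have h3 : star (Kᴴ *ᵥ meVec d) ⬝ᵥ (Kᴴ *ᵥ meVec d)
      = ((∑ p, (‖(Kᴴ *ᵥ meVec d) p‖) ^ 2 : ℝ) : ℂ) := by
    simp only [dotProduct, Pi.star_apply]
    rw [Finset.sum_congr rfl (fun p _ => by
      rw [mul_comm,
        show star ((Kᴴ *ᵥ meVec d) p) = (starRingEnd ℂ) ((Kᴴ *ᵥ meVec d) p) from rfl,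
        Complex.mul_conj, Complex.normSq_eq_norm_sq] :
        ∀ p ∈ Finset.univ, star ((Kᴴ *ᵥ meVec d) p) * (Kᴴ *ᵥ meVec d) p
          = (((‖(Kᴴ *ᵥ meVec d) p‖) ^ 2 : ℝ) : ℂ))]
    rw [← Complex.ofReal_sum]
  rw [h1, h2] at h3
  exact_mod_cast h3.symm

lemma psiUV_bound {d : ℕ} (hd : 0 < d) (U V : Matrix.unitaryGroup (Fin d) ℂ)
    (p : Fin d × Fin d) :
    ‖(((U : Matrix (Fin d) (Fin d) ℂ) ⊗ₖ (V : Matrix (Fin d) (Fin d) ℂ))ᴴ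
      *ᵥ meVec d) p‖ ≤ 1 / Real.sqrt d := by
  have hd0 : (0 : ℝ) < (d : ℝ) := by exact_mod_cast hd
  have hsqd : (0 : ℝ) < Real.sqrt d := Real.sqrt_pos.mpr hd0
  obtain ⟨k, l⟩ := p
  rw [psiUV_apply U V k l]
  rw [norm_mul, Complex.norm_real, Real.norm_eq_abs, abs_of_pos (by positivity : (0:ℝ) < 1 / Real.sqrt d)]
  rw [mul_comm]
  have hsum : ‖∑ i, (starRingEnd ℂ) ((U : Matrix (Fin d) (Fin d) ℂ) i k)
      * (starRingEnd ℂ) ((V : Matrix (Fin d) (Fin d) ℂ) i l)‖ ≤ 1 := by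
    calc ‖∑ i, (starRingEnd ℂ) ((U : Matrix (Fin d) (Fin d) ℂ) i k)
          * (starRingEnd ℂ) ((V : Matrix (Fin d) (Fin d) ℂ) i l)‖
        ≤ ∑ i, ‖(starRingEnd ℂ) ((U : Matrix (Fin d) (Fin d) ℂ) i k)
          * (starRingEnd ℂ) ((V : Matrix (Fin d) (Fin d) ℂ) i l)‖ :=
          norm_sum_le _ _
      _ = ∑ i, ‖(U : Matrix (Fin d) (Fin d) ℂ) i k‖
          * ‖(V : Matrix (Fin d) (Fin d) ℂ) i l‖ := by
          simp [norm_mul, Complex.norm_conj]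
      _ ≤ Real.sqrt (∑ i, ‖(U : Matrix (Fin d) (Fin d) ℂ) i k‖ ^ 2)
          * Real.sqrt (∑ i, ‖(V : Matrix (Fin d) (Fin d) ℂ) i l‖ ^ 2) :=
          Real.sum_mul_le_sqrt_mul_sqrt _ _ _
      _ = 1 := by rw [col_norm U k, col_norm V l]; simp
  calc ‖∑ i, (starRingEnd ℂ) ((U : Matrix (Fin d) (Fin d) ℂ) i k)
        * (starRingEnd ℂ) ((V : Matrix (Fin d) (Fin d) ℂ) i l)‖ * (1 / Real.sqrt d)
      ≤ 1 * (1 / Real.sqrt d) := by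
        apply mul_le_mul_of_nonneg_right hsum (by positivity)
    _ = 1 / Real.sqrt d := one_mul _

lemma sum_abs_lb {d : ℕ} (hd : 0 < d) (r : Fin d × Fin d → ℝ) (hr : ∀ p, 0 ≤ r p)
    (hbd : ∀ p, r p ≤ 1 / Real.sqrt d) (hsq : ∑ p, r p ^ 2 = 1) :
    Real.sqrt d ≤ ∑ p, r p := by
  have hd0 : (0 : ℝ) < (d : ℝ) := by exact_mod_cast hd
  have hsqd : (0 : ℝ) < Real.sqrt d := Real.sqrt_pos.mpr hd0
  have key : ∀ p, Real.sqrt d * r p ^ 2 ≤ r p := by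
    intro p
    have h1 : Real.sqrt d * r p ≤ 1 := by
      have := hbd p
      rw [le_div_iff₀ hsqd] at this
      linarith [this]
    calc Real.sqrt d * r p ^ 2 = (Real.sqrt d * r p) * r p := by ring
      _ ≤ 1 * r p := mul_le_mul_of_nonneg_right h1 (hr p)
      _ = r p := one_mul _
  calc Real.sqrt d = Real.sqrt d * ∑ p, r p ^ 2 := by rw [hsq, mul_one]
    _ = ∑ p, Real.sqrt d * r p ^ 2 := Finset.mul_sum _ _ _
    _ ≤ ∑ p, r p := Finset.sum_le_sum fun p _ => key p

lemma l1_lower {d : ℕ} (hd : 0 < d) (c μ : ℝ) (hc : 0 ≤ c) (hsum : c * (d : ℝ) ^ 2 + μ = 1)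
    (ψ : Fin d × Fin d → ℂ) (hsq : ∑ p, ‖ψ p‖ ^ 2 = 1)
    (hbd : ∀ p, ‖ψ p‖ ≤ 1 / Real.sqrt d) :
    1 + ((d : ℝ) - 1) * |μ| ≤ l1Norm ((c : ℂ) • (1 : Matrix (Fin d × Fin d) (Fin d × Fin d) ℂ)
      + (μ : ℂ) • vecMulVec ψ (star ψ)) := by
  have hd0 : (0 : ℝ) < (d : ℝ) := by exact_mod_cast hd
  have hsqd : (0 : ℝ) < Real.sqrt d := Real.sqrt_pos.mpr hd0
  rw [l1_split]
  have hS : Real.sqrt d ≤ ∑ p, ‖ψ p‖ :=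
    sum_abs_lb hd _ (fun p => norm_nonneg _) hbd hsq
  have hS2 : (d : ℝ) ≤ (∑ p, ‖ψ p‖) ^ 2 := by
    calc (d : ℝ) = Real.sqrt d ^ 2 := (Real.sq_sqrt hd0.le).symm
      _ ≤ (∑ p, ‖ψ p‖) ^ 2 := pow_le_pow_left₀ hsqd.le hS 2
  have hterm1 : 1 ≤ ∑ p, |c + μ * ‖ψ p‖ ^ 2| := by
    have habs : |∑ p, (c + μ * ‖ψ p‖ ^ 2)|
        ≤ ∑ p, |c + μ * ‖ψ p‖ ^ 2| := Finset.abs_sum_le_sum_abs _ _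
    have hval : ∑ p : Fin d × Fin d, (c + μ * ‖ψ p‖ ^ 2) = 1 := by
      rw [Finset.sum_add_distrib, ← Finset.mul_sum, hsq, Finset.sum_const, Finset.card_univ]
      simp only [Fintype.card_prod, Fintype.card_fin, nsmul_eq_mul, mul_one]
      push_cast
      nlinarith [hsum]
    rw [hval] at habs
    simpa using habs
  have hterm2 : ((d : ℝ) - 1) * |μ|
      ≤ |μ| * ((∑ p, ‖ψ p‖) ^ 2 - ∑ p, ‖ψ p‖ ^ 2) := by
    rw [hsq]
    have := abs_nonneg μ
    nlinarith [hS2]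
  linarith [hterm1, hterm2]

lemma l1_identity {d : ℕ} (hd : 0 < d) (c μ : ℝ) (hc : 0 ≤ c) (hcm : 0 ≤ c + μ / d)
    (hsum : c * (d : ℝ) ^ 2 + μ = 1) :
    l1Norm ((c : ℂ) • (1 : Matrix (Fin d × Fin d) (Fin d × Fin d) ℂ) + (μ : ℂ) • mePhi d)
      = 1 + ((d : ℝ) - 1) * |μ| := by
  have hd0 : (0 : ℝ) < (d : ℝ) := by exact_mod_cast hd
  have hsqd : (0 : ℝ) < Real.sqrt d := Real.sqrt_pos.mpr hd0
  rw [show mePhi d = vecMulVec (meVec d) (star (meVec d)) from rfl, l1_split]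
  have hr : ∀ p : Fin d × Fin d, ‖meVec d p‖
      = if p.1 = p.2 then 1 / Real.sqrt d else 0 := by
    intro p
    by_cases h : p.1 = p.2 <;>
      simp [meVec, h, Complex.norm_real, Real.norm_eq_abs, abs_of_pos, hsqd.le, le_of_lt,
        abs_of_nonneg (by positivity : (0:ℝ) ≤ 1 / Real.sqrt d)]
  have hr2 : ∀ p : Fin d × Fin d, ‖meVec d p‖ ^ 2
      = if p.1 = p.2 then 1 / (d : ℝ) else 0 := by
    intro p
    rw [hr p]
    by_cases h : p.1 = p.2 <;> simp [h, div_pow, Real.sq_sqrt hd0.le]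
  have hsumr : ∑ p, ‖meVec d p‖ = Real.sqrt d := by
    simp_rw [hr, sum_prod_ite, mul_zero, add_zero, mul_one_div, Real.div_sqrt]
  have hsumr2 : ∑ p, ‖meVec d p‖ ^ 2 = 1 := by
    simp_rw [hr2, sum_prod_ite, mul_zero, add_zero, mul_one_div, div_self hd0.ne']
  have habs : ∑ p, |c + μ * ‖meVec d p‖ ^ 2| = 1 := by
    have : ∀ p : Fin d × Fin d, |c + μ * ‖meVec d p‖ ^ 2|
        = if p.1 = p.2 then c + μ / d else c := by
      intro p
      rw [hr2 p]
      by_cases h : p.1 = p.2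
      · rw [if_pos h, if_pos h, mul_one_div, abs_of_nonneg hcm]
      · rw [if_neg h, if_neg h, mul_zero, add_zero, abs_of_nonneg hc]
    simp_rw [this, sum_prod_ite]
    field_simp
    nlinarith [hsum]
  rw [habs, hsumr, hsumr2, Real.sq_sqrt hd0.le]
  ring


/-- the one-sided and two-sided negativity of quantumness of the isotropic
state both equal `|λd² − 1|/(2(d+1))`. -/
theorem stmt_15 (d : ℕ) (hd : 2 ≤ d) (lam : ℝ) (h0 : 0 ≤ lam) (h1 : lam ≤ 1) :
    QNA (isotropic d lam) = |lam * (d : ℝ) ^ 2 - 1| / (2 * ((d : ℝ) + 1)) ∧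
    QNAB (isotropic d lam) = |lam * (d : ℝ) ^ 2 - 1| / (2 * ((d : ℝ) + 1)) := by
  have hdpos : 0 < d := by omega
  have hd0 : (0 : ℝ) < (d : ℝ) := by exact_mod_cast hdpos
  have hd2 : (2 : ℝ) ≤ (d : ℝ) := by exact_mod_cast hd
  have hden : (0 : ℝ) < (d : ℝ) ^ 2 - 1 := by nlinarith
  set c : ℝ := (1 - lam) / ((d : ℝ) ^ 2 - 1) with hcdef
  set μ : ℝ := lam - c with hμdef
  have hc : 0 ≤ c := div_nonneg (by linarith) hden.le
  have hkey : c * ((d : ℝ) ^ 2 - 1) = 1 - lam := by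
    rw [hcdef]; field_simp
  have hsum : c * (d : ℝ) ^ 2 + μ = 1 := by rw [hμdef]; nlinarith [hkey]
  have hcm : 0 ≤ c + μ / d := by
    rw [hμdef, show c + (lam - c) / (d : ℝ) = (((d : ℝ) - 1) * c + lam) / d by
      field_simp; ring]
    apply div_nonneg _ hd0.le
    nlinarith [hc, h0]
  have hiso : isotropic d lam = (c : ℂ) • (1 : Matrix (Fin d × Fin d) (Fin d × Fin d) ℂ)
      + (μ : ℂ) • mePhi d := by
    rw [isotropic, hμdef]
    push_cast
    have hdenC : ((d : ℂ) ^ 2 - 1) ≠ 0 := by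
      intro h
      apply hden.ne'
      have h2 : (((d:ℝ)^2 - 1 : ℝ) : ℂ) = 0 := by push_cast; exact h
      exact_mod_cast h2
    rw [hcdef]
    push_cast
    match_scalars <;> (field_simp; try ring)
  set t : ℝ := ((d : ℝ) - 1) * |μ| / 2 with htdef
  have htval : t = |lam * (d : ℝ) ^ 2 - 1| / (2 * ((d : ℝ) + 1)) := by
    have hμval : μ = (lam * (d : ℝ) ^ 2 - 1) / ((d : ℝ) ^ 2 - 1) := by
      rw [hμdef, hcdef]; field_simp; ring
    rw [htdef, hμval, abs_div, abs_of_pos hden]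
    have h2 : (d : ℝ) + 1 ≠ 0 := by nlinarith
    field_simp
    ring
  haveI : Nonempty (Matrix.unitaryGroup (Fin d) ℂ) := ⟨1⟩
  constructor
  · have hval : ∀ U : Matrix.unitaryGroup (Fin d) ℂ,
        ((∑ i, ∑ j, traceNorm (blockOf (conjU U (isotropic d lam)) i j)) - 1) / 2 = t := by
      intro U
      rw [hiso, qna_sum hdpos c μ hc hcm U, hsum, htdef]
      ring
    calc QNA (isotropic d lam)
        = ⨅ U : Matrix.unitaryGroup (Fin d) ℂ,
            ((∑ i, ∑ j, traceNorm (blockOf (conjU U (isotropic d lam)) i j)) - 1) / 2 := rfl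
      _ = ⨅ _ : Matrix.unitaryGroup (Fin d) ℂ, t := iInf_congr hval
      _ = t := ciInf_const
      _ = |lam * (d : ℝ) ^ 2 - 1| / (2 * ((d : ℝ) + 1)) := htval
  · have hconjUV : ∀ U V : Matrix.unitaryGroup (Fin d) ℂ,
        conjUV U V (isotropic d lam)
          = (c : ℂ) • (1 : Matrix (Fin d × Fin d) (Fin d × Fin d) ℂ)
            + (μ : ℂ) • vecMulVec
              ((((U : Matrix (Fin d) (Fin d) ℂ) ⊗ₖ (V : Matrix (Fin d) (Fin d) ℂ))ᴴ) *ᵥ meVec d)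
              (star ((((U : Matrix (Fin d) (Fin d) ℂ) ⊗ₖ (V : Matrix (Fin d) (Fin d) ℂ))ᴴ)
                *ᵥ meVec d)) := by
      intro U V
      rw [show conjUV U V (isotropic d lam)
          = (((U : Matrix (Fin d) (Fin d) ℂ) ⊗ₖ (V : Matrix (Fin d) (Fin d) ℂ))ᴴ)
            * (isotropic d lam)
            * ((U : Matrix (Fin d) (Fin d) ℂ) ⊗ₖ (V : Matrix (Fin d) (Fin d) ℂ)) from rfl,
        hiso, show mePhi d = vecMulVec (meVec d) (star (meVec d)) from rfl]
      exact conj_iso _ (kron_unitary U V) c μ (meVec d)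
    have hlow : ∀ U V : Matrix.unitaryGroup (Fin d) ℂ,
        t ≤ (l1Norm (conjUV U V (isotropic d lam)) - 1) / 2 := by
      intro U V
      have hb := l1_lower hdpos c μ hc hsum
        ((((U : Matrix (Fin d) (Fin d) ℂ) ⊗ₖ (V : Matrix (Fin d) (Fin d) ℂ))ᴴ) *ᵥ meVec d)
        (psi_norm _ (kron_unitary' U V) hdpos) (psiUV_bound hdpos U V)
      rw [hconjUV U V]
      rw [htdef]
      linarith [hb]
    have hupper : (l1Norm (conjUV (1 : Matrix.unitaryGroup (Fin d) ℂ) 1 (isotropic d lam)) - 1)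
        / 2 = t := by
      have h11 : conjUV (1 : Matrix.unitaryGroup (Fin d) ℂ) 1 (isotropic d lam)
          = isotropic d lam := by
        unfold conjUV
        simp [Matrix.one_kronecker_one]
      rw [h11, hiso, l1_identity hdpos c μ hc hcm hsum, htdef]
      ring
    rw [← htval]
    refine le_antisymm ?_ ?_
    · calc QNAB (isotropic d lam)
          ≤ ⨅ V : Matrix.unitaryGroup (Fin d) ℂ,
              (l1Norm (conjUV (1 : Matrix.unitaryGroup (Fin d) ℂ) V (isotropic d lam)) - 1) / 2 :=
            ciInf_le ⟨t, by rintro x ⟨U, rfl⟩; exact le_ciInf (hlow U)⟩ 1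
        _ ≤ (l1Norm (conjUV (1 : Matrix.unitaryGroup (Fin d) ℂ) 1 (isotropic d lam)) - 1) / 2 :=
            ciInf_le ⟨t, by rintro x ⟨V, rfl⟩; exact hlow 1 V⟩ 1
        _ = t := hupper
    · exact le_ciInf fun U => le_ciInf fun V => hlow U V
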